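/- Main theorem: Let p be an odd prime, m ≥ 1, and f : GF(p)^{2m} → GF(p) even with f(0)=0. If the p component Cayley graphs of f are all strongly regular and either all of Latin square type with parameters (N², (N-1)r_i, N+r_i²-3r_i, r_i²-r_i) for N = p^m, or all of negative Latin square type with the same parameter form for N = -p^m, where r_i = N/p for 1 ≤ i ≤ p-1 and r_p = N/p + 1, then f is bent; moreover W_f(0) = N and for each x ≠ 0, W_f(x) = ζ^j N for some 0 ≤ j ≤ p-1. -/

import Mathlib

open Finset BigOperators

noncomputable def zeta (p : ℕ) : ℂ := Complex.exp (2 * Real.pi * Complex.I / p)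

def ip {p n : ℕ} (x y : Fin n → ZMod p) : ZMod p := ∑ i, x i * y i

noncomputable def walsh {p n : ℕ} [NeZero p]
    (f : (Fin n → ZMod p) → ZMod p) (x : Fin n → ZMod p) : ℂ :=
  ∑ y, zeta p ^ (f y - ip x y).val

/-- The component Cayley graph `Γ_i` of `f` on `GF(p)^n`: distinct vertices `x, y` are
adjacent iff `x - y` lies in the connection set `D_i = {z ≠ 0 | f z = i}` (for an even `f`
the symmetrization in `fromRel` is harmless).  For `i ≠ 0` this set is `f⁻¹(i)`, and for
`i = 0` it is `f⁻¹(0) \ {0}`; i.e. `i = 0` plays the role of the index `p`. -/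
def cayleyGraph {p n : ℕ} (f : (Fin n → ZMod p) → ZMod p) (i : ZMod p) :
    SimpleGraph (Fin n → ZMod p) :=
  SimpleGraph.fromRel (fun x y => f (x - y) = i)



lemma zeta_prim (p : ℕ) [Fact p.Prime] : IsPrimitiveRoot (zeta p) p := by
  simpa [zeta] using Complex.isPrimitiveRoot_exp p (Fact.out : p.Prime).ne_zero

lemma zeta_pow_p (p : ℕ) [Fact p.Prime] : zeta p ^ p = 1 := (zeta_prim p).pow_eq_one

lemma zeta_pow_mod (p : ℕ) [Fact p.Prime] (k : ℕ) : zeta p ^ (k % p) = zeta p ^ k := by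
  conv_rhs => rw [← Nat.div_add_mod k p]
  rw [pow_add, pow_mul, zeta_pow_p, one_pow, one_mul]

noncomputable def ee (p : ℕ) (a : ZMod p) : ℂ := zeta p ^ a.val

lemma ee_add (p : ℕ) [Fact p.Prime] (a b : ZMod p) : ee p (a + b) = ee p a * ee p b := by
  rw [ee, ee, ee, ← pow_add, ZMod.val_add, zeta_pow_mod]

lemma ee_zero (p : ℕ) [Fact p.Prime] : ee p 0 = 1 := by
  simp [ee, ZMod.val_zero]

lemma sum_ee (p : ℕ) [Fact p.Prime] : ∑ i : ZMod p, ee p i = 0 := by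
  have h2 : 1 < p := (Fact.out : p.Prime).one_lt
  have h := (zeta_prim p).geom_sum_eq_zero h2
  rw [← h]
  apply Finset.sum_nbij' (i := fun (a : ZMod p) => a.val) (j := fun (j : ℕ) => (j : ZMod p))
  · intro a _; exact Finset.mem_range.mpr (ZMod.val_lt a)
  · intro a _; exact Finset.mem_univ _
  · intro a _; exact ZMod.natCast_zmod_val a
  · intro j hj; exact ZMod.val_cast_of_lt (Finset.mem_range.mp hj)
  · intro a _; rfl


open scoped Classical

def DD {p : ℕ} [NeZero p] (n : ℕ) (f : (Fin n → ZMod p) → ZMod p) (i : ZMod p) :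
    Finset (Fin n → ZMod p) := Finset.univ.filter (fun z => z ≠ 0 ∧ f z = i)

lemma cayley_adj {p n : ℕ} {f : (Fin n → ZMod p) → ZMod p}
    (heven : ∀ x, f (-x) = f x) (i : ZMod p) (u v : Fin n → ZMod p) :
    (cayleyGraph f i).Adj u v ↔ u ≠ v ∧ f (u - v) = i := by
  rw [cayleyGraph, SimpleGraph.fromRel_adj]
  have h : f (v - u) = f (u - v) := by rw [← heven (u - v)]; ring_nf
  rw [h]
  tauto

lemma mem_DD {p n : ℕ} [NeZero p] {f : (Fin n → ZMod p) → ZMod p} {i : ZMod p}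
    {z : Fin n → ZMod p} : z ∈ DD n f i ↔ z ≠ 0 ∧ f z = i := by
  simp [DD]

lemma nbr_eq {p n : ℕ} [NeZero p] {f : (Fin n → ZMod p) → ZMod p}
    (heven : ∀ x, f (-x) = f x) (i : ZMod p) :
    (cayleyGraph f i).neighborFinset 0 = DD n f i := by
  ext u
  rw [SimpleGraph.mem_neighborFinset, cayley_adj heven, mem_DD]
  constructor
  · rintro ⟨h1, h2⟩
    refine ⟨Ne.symm h1, ?_⟩
    rw [← heven u]; simpa using h2
  · rintro ⟨h1, h2⟩
    refine ⟨Ne.symm h1, ?_⟩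
    rw [show (0:Fin n → ZMod p) - u = -u by ring, heven]; exact h2

lemma common_card {p n : ℕ} [NeZero p] {f : (Fin n → ZMod p) → ZMod p}
    (heven : ∀ x, f (-x) = f x) (i : ZMod p) (z : Fin n → ZMod p) :
    Fintype.card ((cayleyGraph f i).commonNeighbors z 0) =
      ((DD n f i).filter (fun a => z - a ∈ DD n f i)).card := by
  rw [← Set.toFinset_card]
  congr 1
  ext u
  rw [Set.mem_toFinset, SimpleGraph.mem_commonNeighbors, Finset.mem_filter,
    cayley_adj heven, cayley_adj heven, mem_DD, mem_DD]
  constructor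
  · rintro ⟨⟨h1, h2⟩, ⟨h3, h4⟩⟩
    refine ⟨⟨Ne.symm h3, ?_⟩, sub_ne_zero.mpr h1, h2⟩
    rw [← heven u]; simpa using h4
  · rintro ⟨⟨h1, h2⟩, h3, h4⟩
    refine ⟨⟨fun hh => h3 (by rw [hh]; ring), h4⟩, Ne.symm h1, ?_⟩
    rw [show (0:Fin n → ZMod p) - u = -u by ring, heven]; exact h2


noncomputable def chi (p n : ℕ) (x z : Fin n → ZMod p) : ℂ := ee p (- ip x z)

lemma ip_add {p n : ℕ} (x a b : Fin n → ZMod p) : ip x (a + b) = ip x a + ip x b := by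
  simp [ip, mul_add, Finset.sum_add_distrib]

lemma chi_add {p n : ℕ} [Fact p.Prime] (x a b : Fin n → ZMod p) :
    chi p n x (a + b) = chi p n x a * chi p n x b := by
  rw [chi, chi, chi, ip_add, neg_add, ee_add]

lemma chi_zero {p n : ℕ} [Fact p.Prime] (x : Fin n → ZMod p) : chi p n x 0 = 1 := by
  have : ip x 0 = 0 := by simp [ip]
  rw [chi, this, neg_zero, ee_zero]

lemma sum_chi {p n : ℕ} [Fact p.Prime] {x : Fin n → ZMod p} (hx : x ≠ 0) :
    ∑ z : Fin n → ZMod p, chi p n x z = 0 := by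
  obtain ⟨i0, hi0⟩ : ∃ i0, x i0 ≠ 0 := by
    by_contra h
    push_neg at h
    exact hx (funext h)
  set w : Fin n → ZMod p := fun j => if j = i0 then (x i0)⁻¹ else 0 with hw
  have hipw : ip x w = 1 := by
    rw [ip, Finset.sum_eq_single i0]
    · simp [hw]
      exact mul_inv_cancel₀ hi0
    · intro b _ hb; simp [hw, hb]
    · simp
  have hchiw : chi p n x w ≠ 1 := by
    rw [chi, hipw]
    intro h
    have h1 : ee p (-1) * ee p 1 = 1 := by rw [← ee_add]; simp [ee_zero]
    rw [h, one_mul] at h1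
    rw [ee, ZMod.val_one] at h1
    simp at h1
    exact (zeta_prim p).ne_one (Fact.out : p.Prime).one_lt h1
  have key : ∑ z, chi p n x (z + w) = ∑ z, chi p n x z :=
    Fintype.sum_equiv (Equiv.addRight w) _ _ (fun z => rfl)
  have key2 : (∑ z, chi p n x z) * chi p n x w = ∑ z, chi p n x z := by
    rw [Finset.sum_mul]
    rw [show ∑ z, chi p n x z * chi p n x w = ∑ z, chi p n x (z + w) from
      Finset.sum_congr rfl fun z _ => (chi_add x z w).symm]
    exact key
  have := sub_eq_zero.mpr key2
  rw [← mul_sub_one] at this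
  rcases mul_eq_zero.mp this with h | h
  · exact h
  · exact absurd (by linear_combination h) hchiw

open scoped Classical in
noncomputable def SS (p n : ℕ) [NeZero p] (f : (Fin n → ZMod p) → ZMod p)
    (i : ZMod p) (x : Fin n → ZMod p) : ℂ := ∑ a ∈ DD n f i, chi p n x a

open scoped Classical in
lemma quad {p n : ℕ} [Fact p.Prime] {f : (Fin n → ZMod p) → ZMod p}
    (heven : ∀ x, f (-x) = f x) (i : ZMod p) {x : Fin n → ZMod p} (hx : x ≠ 0)
    {n' k l mu : ℕ} (hsrg : (cayleyGraph f i).IsSRGWith n' k l mu) :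
    SS p n f i x ^ 2 = (k : ℂ) - mu + ((l : ℂ) - mu) * SS p n f i x := by
  set D := DD n f i with hD
  set χ := chi p n x with hχ
  have hDcard : D.card = k := by
    have := hsrg.regular 0
    rwa [SimpleGraph.degree, nbr_eq heven] at this
  have hcnt : ∀ z : Fin n → ZMod p,
      ((D.filter (fun a => z - a ∈ D)).card : ℂ) =
        if z = 0 then (k : ℂ) else if z ∈ D then (l : ℂ) else (mu : ℂ) := by
    intro z
    by_cases hz : z = 0
    · subst hz
      rw [if_pos rfl]
      have : D.filter (fun a => (0:Fin n → ZMod p) - a ∈ D) = D := by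
        apply Finset.filter_true_of_mem
        intro a ha
        rw [mem_DD] at ha ⊢
        rw [zero_sub]
        exact ⟨neg_ne_zero.mpr ha.1, by rw [heven]; exact ha.2⟩
      rw [this, hDcard]
    · rw [if_neg hz]
      by_cases hzD : z ∈ D
      · rw [if_pos hzD]
        have hadj : (cayleyGraph f i).Adj z 0 := by
          rw [cayley_adj heven]
          rw [mem_DD] at hzD
          exact ⟨hzD.1, by rw [sub_zero]; exact hzD.2⟩
        have := hsrg.of_adj z 0 hadj
        rw [common_card heven] at this
        rw [← this]
      · rw [if_neg hzD]
        have hnadj : ¬ (cayleyGraph f i).Adj z 0 := by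
          rw [cayley_adj heven]
          rintro ⟨h1, h2⟩
          exact hzD (mem_DD.mpr ⟨hz, by rwa [sub_zero] at h2⟩)
        have := hsrg.of_not_adj hz hnadj
        rw [common_card heven] at this
        rw [← this]
  have e1 : SS p n f i x * SS p n f i x =
      ∑ z : Fin n → ZMod p, ((D.filter (fun a => z - a ∈ D)).card : ℂ) * χ z := by
    rw [SS, ← hD, ← hχ, Finset.sum_mul_sum]
    have step1 : ∀ a ∈ D, ∑ b ∈ D, χ a * χ b = ∑ z : Fin n → ZMod p,
        if z - a ∈ D then χ z else 0 := by
      intro a _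
      have : ∑ b ∈ D, χ a * χ b = ∑ b : Fin n → ZMod p, if b ∈ D then χ (a + b) else 0 := by
        rw [Finset.sum_ite_mem, Finset.univ_inter]
        exact Finset.sum_congr rfl fun b _ => (chi_add x a b).symm
      rw [this]
      apply Fintype.sum_equiv (Equiv.addLeft a)
      intro b
      simp only [Equiv.coe_addLeft, add_sub_cancel_left]
    rw [Finset.sum_congr rfl step1, Finset.sum_comm]
    apply Finset.sum_congr rfl
    intro z _
    rw [← Finset.sum_filter, Finset.sum_const, nsmul_eq_mul]
  have e2 : ∀ z : Fin n → ZMod p,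
      ((D.filter (fun a => z - a ∈ D)).card : ℂ) * χ z =
        (mu : ℂ) * χ z + ((k : ℂ) - mu) * (if z = 0 then 1 else 0)
          + ((l : ℂ) - mu) * (if z ∈ D then χ z else 0) := by
    intro z
    rw [hcnt z]
    by_cases hz : z = 0
    · have hzD : z ∉ D := by rw [mem_DD]; tauto
      have hχ0 : χ z = 1 := by rw [hz, hχ]; exact chi_zero x
      rw [if_pos hz, if_pos hz, if_neg hzD, hχ0]; ring
    · rw [if_neg hz, if_neg hz]
      by_cases hzD : z ∈ D
      · rw [if_pos hzD, if_pos hzD]; ring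
      · rw [if_neg hzD, if_neg hzD]; ring
  rw [sq, e1, Finset.sum_congr rfl fun z _ => e2 z]
  rw [Finset.sum_add_distrib, Finset.sum_add_distrib, ← Finset.mul_sum, ← Finset.mul_sum,
    ← Finset.mul_sum]
  rw [show ∑ z : Fin n → ZMod p, χ z = 0 from sum_chi hx]
  rw [Finset.sum_ite_eq' Finset.univ (0 : Fin n → ZMod p) (fun _ => (1:ℂ))]
  rw [Finset.sum_ite_mem, Finset.univ_inter]
  simp only [Finset.mem_univ, if_pos, mul_zero, zero_add]
  rw [SS, ← hD, ← hχ]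
  ring


open scoped Classical in
lemma filter_ne_eq_erase {p n : ℕ} [NeZero p] :
    (Finset.univ.filter (fun z : Fin n → ZMod p => z ≠ 0)) = Finset.univ.erase 0 := by
  ext a; simp [Finset.mem_erase]

open scoped Classical in
lemma fiber_eq {p n : ℕ} [NeZero p] (f : (Fin n → ZMod p) → ZMod p) (i : ZMod p) :
    (Finset.univ.filter (fun z : Fin n → ZMod p => z ≠ 0)).filter (fun a => f a = i)
      = DD n f i := by
  ext a; simp [DD, and_assoc]

open scoped Classical in
lemma sum_SS {p n : ℕ} [Fact p.Prime] (f : (Fin n → ZMod p) → ZMod p)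
    {x : Fin n → ZMod p} (hx : x ≠ 0) :
    ∑ i : ZMod p, SS p n f i x = -1 := by
  have h1 : ∑ i : ZMod p, SS p n f i x
      = ∑ a ∈ Finset.univ.filter (fun z : Fin n → ZMod p => z ≠ 0), chi p n x a := by
    rw [← Finset.sum_fiberwise (Finset.univ.filter (fun z : Fin n → ZMod p => z ≠ 0))
      f (chi p n x)]
    exact Finset.sum_congr rfl fun i _ => by rw [SS, fiber_eq]
  rw [h1, filter_ne_eq_erase]
  have h2 := Finset.add_sum_erase Finset.univ (chi p n x) (Finset.mem_univ 0)
  rw [sum_chi hx, chi_zero] at h2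
  linear_combination h2

open scoped Classical in
lemma walsh_decomp {p n : ℕ} [Fact p.Prime] (f : (Fin n → ZMod p) → ZMod p)
    (h0 : f 0 = 0) (x : Fin n → ZMod p) :
    walsh f x = 1 + ∑ i : ZMod p, ee p i * SS p n f i x := by
  have hterm : ∀ y : Fin n → ZMod p,
      zeta p ^ (f y - ip x y).val = ee p (f y) * chi p n x y := by
    intro y
    rw [chi, ← ee_add, sub_eq_add_neg]
    rfl
  rw [walsh, Finset.sum_congr rfl fun y _ => hterm y]
  have h2 := Finset.add_sum_erase Finset.univ (fun y => ee p (f y) * chi p n x y)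
    (Finset.mem_univ 0)
  rw [← h2]
  rw [h0, ee_zero, chi_zero, one_mul]
  congr 1
  rw [← filter_ne_eq_erase]
  rw [← Finset.sum_fiberwise (Finset.univ.filter (fun z : Fin n → ZMod p => z ≠ 0))
      f (fun y => ee p (f y) * chi p n x y)]
  apply Finset.sum_congr rfl
  intro i _
  rw [fiber_eq, SS, Finset.mul_sum]
  apply Finset.sum_congr rfl
  intro a ha
  rw [(mem_DD.mp ha).2]


open scoped Classical in
/-- **Main theorem.** Let `p` be an odd prime, `m ≥ 1`, and
`f : GF(p)^{2m} → GF(p)` even with `f 0 = 0`.  If the `p` component Cayley graphs of `f`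
are all strongly regular with parameters `(N², (N-1)r_i, N + r_i² - 3r_i, r_i² - r_i)`,
either all of Latin square type (`N = p^m`) or all of negative Latin square type
(`N = -p^m`), where `r_i = N/p` for `1 ≤ i ≤ p-1` and `r_p = N/p + 1`, then `f` is bent;
moreover `W_f(0) = N` and for each `x ≠ 0`, `W_f(x) = ζ^j N` for some `0 ≤ j ≤ p-1`. -/
theorem stmt12 (p m : ℕ) [Fact p.Prime] (hodd : p ≠ 2) (hm : 1 ≤ m)
    (f : (Fin (2 * m) → ZMod p) → ZMod p)
    (heven : ∀ x, f (-x) = f x) (h0 : f 0 = 0)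
    (N : ℤ) (hN : N = (p : ℤ) ^ m ∨ N = -((p : ℤ) ^ m))
    (R : ZMod p → ℤ)
    (hR : ∀ i : ZMod p, R i = if i = 0 then N / p + 1 else N / p)
    (hSRG : ∀ i : ZMod p, ∃ k l mu : ℕ,
      (k : ℤ) = (N - 1) * R i ∧ (l : ℤ) = N + R i ^ 2 - 3 * R i ∧
      (mu : ℤ) = R i ^ 2 - R i ∧
      (cayleyGraph f i).IsSRGWith (p ^ (2 * m)) k l mu) :
    (∀ x, ‖walsh f x‖ = (p : ℝ) ^ m) ∧
    walsh f 0 = (N : ℂ) ∧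
    (∀ x, x ≠ 0 → ∃ j : ℕ, j ≤ p - 1 ∧ walsh f x = zeta p ^ j * (N : ℂ)) := by

  have hp : p.Prime := Fact.out
  have hp0 : (p : ℤ) ≠ 0 := by exact_mod_cast hp.ne_zero
  choose K L MU hk hl hmu hsrg using hSRG
  -- basic numeric facts
  have hdvd : (p : ℤ) ∣ N := by
    rcases hN with h | h <;> rw [h]
    · exact dvd_pow_self _ (by omega)
    · exact (dvd_pow_self _ (by omega : m ≠ 0)).neg_right
  have hNp : ((N / p : ℤ) : ℂ) * (p : ℂ) = (N : ℂ) := by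
    have := Int.ediv_mul_cancel hdvd
    exact_mod_cast congrArg (fun t : ℤ => (t : ℂ)) this
  have hNZ : N ≠ 0 := by
    rcases hN with h | h <;> rw [h] <;> simp [hp.ne_zero] <;> positivity
  have hNne : (N : ℂ) ≠ 0 := Int.cast_ne_zero.mpr hNZ
  have habsN : ‖((N : ℤ) : ℂ)‖ = (p : ℝ) ^ m := by
    rw [Complex.norm_intCast]
    rcases hN with h | h
    · rw [h]; push_cast; rw [abs_of_nonneg (by positivity)]
    · rw [h]; push_cast; rw [abs_neg, abs_of_nonneg (by positivity)]
  -- character sums with R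
  have hRdec : ∀ i : ZMod p, ((R i : ℤ) : ℂ) =
      ((N / p : ℤ) : ℂ) + (if i = 0 then 1 else 0) := by
    intro i
    rw [hR i]
    split_ifs <;> push_cast <;> ring
  have hsumR : ∑ i : ZMod p, ((R i : ℤ) : ℂ) = (N : ℂ) + 1 := by
    rw [Finset.sum_congr rfl fun i _ => hRdec i, Finset.sum_add_distrib,
      Finset.sum_const, Finset.sum_ite_eq' Finset.univ (0 : ZMod p) (fun _ => (1 : ℂ))]
    simp only [Finset.card_univ, ZMod.card, Finset.mem_univ, if_pos, nsmul_eq_mul]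
    rw [mul_comm, hNp]
  have hsumRee : ∑ i : ZMod p, ee p i * ((R i : ℤ) : ℂ) = 1 := by
    have : ∀ i : ZMod p, ee p i * ((R i : ℤ) : ℂ) =
        ((N / p : ℤ) : ℂ) * ee p i + (if i = 0 then ee p i else 0) := by
      intro i
      rw [hRdec i]
      split_ifs <;> ring
    rw [Finset.sum_congr rfl fun i _ => this i, Finset.sum_add_distrib, ← Finset.mul_sum,
      sum_ee, mul_zero, zero_add,
      Finset.sum_ite_eq' Finset.univ (0 : ZMod p) (fun i => ee p i)]
    simp [ee_zero]
  -- degree facts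
  have hKC : ∀ i : ZMod p, ((K i : ℕ) : ℂ) = ((N : ℂ) - 1) * ((R i : ℤ) : ℂ) := by
    intro i
    have := congrArg (fun t : ℤ => (t : ℂ)) (hk i)
    push_cast at this ⊢
    exact this
  -- walsh at 0
  have hW0 : walsh f 0 = (N : ℂ) := by
    rw [walsh_decomp f h0 0]
    have hSS0 : ∀ i : ZMod p, SS p (2 * m) f i 0 = ((K i : ℕ) : ℂ) := by
      intro i
      have hcard : (DD (2 * m) f i).card = K i := by
        have := (hsrg i).regular 0
        rwa [SimpleGraph.degree, nbr_eq heven] at this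
      rw [SS, ← hcard]
      rw [Finset.sum_congr rfl fun a _ => show chi p (2 * m) 0 a = 1 by
        rw [chi, show ip (0 : Fin (2 * m) → ZMod p) a = 0 by simp [ip], neg_zero, ee_zero]]
      rw [Finset.sum_const, nsmul_eq_mul, mul_one]
    rw [Finset.sum_congr rfl fun i _ => by rw [hSS0 i, hKC i]]
    rw [Finset.sum_congr rfl fun i _ => show ee p i * (((N:ℂ) - 1) * ((R i : ℤ):ℂ))
        = ((N:ℂ) - 1) * (ee p i * ((R i : ℤ):ℂ)) by ring]
    rw [← Finset.mul_sum, hsumRee, mul_one]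
    ring
  -- main claim for x ≠ 0
  have hmain : ∀ x : Fin (2 * m) → ZMod p, x ≠ 0 →
      ∃ j0 : ZMod p, walsh f x = ee p j0 * (N : ℂ) := by
    intro x hx
    set S : ZMod p → ℂ := fun i => SS p (2 * m) f i x with hSdef
    have hroots : ∀ i : ZMod p, S i = (N : ℂ) - ((R i : ℤ) : ℂ) ∨ S i = -((R i : ℤ) : ℂ) := by
      intro i
      have hq := quad heven i hx (hsrg i)
      have hkC := congrArg (fun t : ℤ => (t : ℂ)) (hk i)
      have hlC := congrArg (fun t : ℤ => (t : ℂ)) (hl i)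
      have hmuC := congrArg (fun t : ℤ => (t : ℂ)) (hmu i)
      push_cast at hkC hlC hmuC
      rw [hkC, hlC, hmuC] at hq
      have hfact : (S i - ((N : ℂ) - ((R i : ℤ) : ℂ))) * (S i + ((R i : ℤ) : ℂ)) = 0 := by
        linear_combination hq
      rcases mul_eq_zero.mp hfact with h | h
      · exact Or.inl (by linear_combination h)
      · exact Or.inr (by linear_combination h)
    set T : Finset (ZMod p) := Finset.univ.filter (fun i => S i = (N : ℂ) - ((R i : ℤ) : ℂ))
      with hT
    have hSdec : ∀ i : ZMod p, S i = -((R i : ℤ) : ℂ) + (if i ∈ T then (N : ℂ) else 0) := by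
      intro i
      by_cases hi : i ∈ T
      · rw [if_pos hi]
        have := (Finset.mem_filter.mp hi).2
        rw [this]; ring
      · rw [if_neg hi]
        rcases hroots i with h | h
        · exact absurd (Finset.mem_filter.mpr ⟨Finset.mem_univ i, h⟩) hi
        · rw [h]; ring
    have hsum : ∑ i : ZMod p, S i = -1 := sum_SS f hx
    have hTsum : ∑ i : ZMod p, (if i ∈ T then (N : ℂ) else 0) = (T.card : ℂ) * (N : ℂ) := by
      rw [Finset.sum_ite_mem, Finset.univ_inter, Finset.sum_const, nsmul_eq_mul]
    have hcard1 : ((T.card : ℕ) : ℂ) * (N : ℂ) = (N : ℂ) := by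
      have := hsum
      rw [Finset.sum_congr rfl fun i _ => hSdec i, Finset.sum_add_distrib, hTsum] at this
      rw [show ∑ i : ZMod p, -((R i : ℤ) : ℂ) = -((N : ℂ) + 1) by
        rw [← hsumR]; exact Finset.sum_neg_distrib (f := fun i => ((R i : ℤ) : ℂ))] at this
      linear_combination this
    have hTcard : T.card = 1 := by
      have h1 : ((T.card : ℕ) : ℂ) = 1 :=
        mul_right_cancel₀ hNne (hcard1.trans (one_mul _).symm)
      exact_mod_cast h1
    obtain ⟨j0, hj0⟩ := Finset.card_eq_one.mp hTcard
    refine ⟨j0, ?_⟩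
    rw [walsh_decomp f h0 x]
    rw [Finset.sum_congr rfl fun i _ => by rw [show SS p (2*m) f i x = S i from rfl, hSdec i]]
    rw [Finset.sum_congr rfl fun i _ => show ee p i * (-((R i : ℤ) : ℂ)
        + (if i ∈ T then (N : ℂ) else 0))
        = -(ee p i * ((R i : ℤ) : ℂ)) + (if i ∈ T then ee p i * (N : ℂ) else 0) by
      split_ifs <;> ring]
    rw [Finset.sum_add_distrib, Finset.sum_neg_distrib, hsumRee, hj0]
    rw [Finset.sum_ite_mem, Finset.univ_inter, Finset.sum_singleton]
    ring
  refine ⟨?_, hW0, ?_⟩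
  · intro x
    by_cases hx : x = 0
    · rw [hx, hW0]; exact habsN
    · obtain ⟨j0, hj⟩ := hmain x hx
      have hz1 : ‖zeta p‖ = 1 := by
        simpa using Complex.norm_eq_one_of_pow_eq_one (zeta_pow_p p) hp.ne_zero
      rw [hj, norm_mul, ee, norm_pow, hz1, one_pow, one_mul, habsN]
  · intro x hx
    obtain ⟨j0, hj⟩ := hmain x hx
    refine ⟨j0.val, ?_, ?_⟩
    · have := ZMod.val_lt j0
      omega
    · rw [hj, ee]
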